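/- Consider the randomized greedy freezing procedure with parameter p′ ∈ (0,1) in the CSP setting. Let T ⊆ 𝒞 be a collection of constraints such that vbl(C) ∩ vbl(C′) = ∅ for all distinct C, C′ ∈ T. For h ∈ {0,1,…,n}, let ι(h) denote the number of variables among v₁,…,v_h assigned a value by the procedure, let 𝔖(h) be the σ-algebra generated by the procedure's output restricted to the variables v₁,…,v_h, and set M_h = ∏_{C∈T} ℙ[C | P_{ι(h)}]. Then for every h ∈ {0,1,…,n−1}, E_ν[M_{h+1} | 𝔖(h)] = M_h; that is, (M_h) is a martingale with respect to (𝔖(h)). -/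

import Mathlib

open Finset
open scoped Classical

/-! ## The CSP setting

A constraint satisfaction problem has variables `Fin n`, each taking values in `Fin q`
(the uniform product measure `ℙ` makes the variables independent and uniform), and
constraints `Fin m`; constraint `j` depends only on the variables in `vbl j`, and
`viol j σ` means that the assignment `σ` violates constraint `j`. -/

/-- A full assignment `σ` is compatible with (extends) the partial assignment `X`. -/
def Compat {n q : ℕ} (X : Fin n → Option (Fin q)) (σ : Fin n → Fin q) : Prop :=
  ∀ v a, X v = some a → σ v = a

/-- `condP viol j X` is the conditional probability `ℙ[C_j | X]` that constraint `j` is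
violated, under the uniform product measure conditioned on agreeing with the partial
assignment `X`. -/
noncomputable def condP {n q m : ℕ} (viol : Fin m → (Fin n → Fin q) → Prop)
    (j : Fin m) (X : Fin n → Option (Fin q)) : ℝ :=
  ((Finset.univ.filter fun σ : Fin n → Fin q => Compat X σ ∧ viol j σ).card : ℝ) /
    ((Finset.univ.filter fun σ : Fin n → Fin q => Compat X σ).card : ℝ)

/-- One step of the greedy freezing procedure, processing variable `i`, where the random
seed `ω` prescribes the value a variable receives when it is assigned. The state is a pair
(partial assignment, set of frozen variables). If `i` is frozen it is skipped; otherwise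
`i` is assigned the value `ω i`, and every still-unassigned variable lying in a constraint
that has become dangerous (conditional probability of violation exceeding `p'`) is frozen. -/
noncomputable def greedyStep {n q m : ℕ} (vbl : Fin m → Finset (Fin n))
    (viol : Fin m → (Fin n → Fin q) → Prop) (p' : ℝ) (ω : Fin n → Fin q)
    (st : (Fin n → Option (Fin q)) × Finset (Fin n)) (i : Fin n) :
    (Fin n → Option (Fin q)) × Finset (Fin n) :=
  if i ∈ st.2 then st
  else
    let X' := Function.update st.1 i (some (ω i))
    (X', st.2 ∪ Finset.univ.filter fun v =>
      X' v = none ∧ ∃ j, v ∈ vbl j ∧ p' < condP viol j X')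

/-- `greedyRun vbl viol p' ω h` is the state of the greedy freezing procedure with
parameter `p'` and random seed `ω` after the variables `v_1, …, v_h` (i.e. the first `h`
variables in the fixed order) have been processed: since the procedure always selects the
lowest-indexed available variable, processing the variables in index order — skipping
frozen ones — implements the procedure exactly, and the first component of
`greedyRun vbl viol p' ω h` is the partial assignment `P_{ι(h)}`, where `ι(h)` is the
number of variables among `v_1, …, v_h` that have been assigned values.
In particular `greedyRun vbl viol p' ω n` gives the final partial assignment `P_s`, and
as `ω` ranges uniformly over `Fin n → Fin q`, its law is the distribution `ν`. -/
noncomputable def greedyRun {n q m : ℕ} (vbl : Fin m → Finset (Fin n))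
    (viol : Fin m → (Fin n → Fin q) → Prop) (p' : ℝ) (ω : Fin n → Fin q) :
    ℕ → (Fin n → Option (Fin q)) × Finset (Fin n)
  | 0 => (fun _ => none, ∅)
  | h + 1 =>
    if hh : h < n then greedyStep vbl viol p' ω (greedyRun vbl viol p' ω h) ⟨h, hh⟩
    else greedyRun vbl viol p' ω h

section Aux
variable {n q m : ℕ}

lemma compat_update_iff {X : Fin n → Option (Fin q)} {v : Fin n} (hX : X v = none)
    (a : Fin q) (σ : Fin n → Fin q) :
    Compat (Function.update X v (some a)) σ ↔ Compat X σ ∧ σ v = a := by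
  constructor
  · intro h
    refine ⟨fun w b hw => ?_, h v a (by simp)⟩
    have hwv : w ≠ v := by rintro rfl; rw [hX] at hw; cases hw
    exact h w b (by simpa [Function.update_of_ne hwv] using hw)
  · rintro ⟨h1, h2⟩ w b hw
    rcases eq_or_ne w v with rfl | hwv
    · simp only [Function.update_self, Option.some.injEq] at hw
      rw [h2, hw]
    · exact h1 w b (by simpa [Function.update_of_ne hwv] using hw)

lemma compat_update_val {X : Fin n → Option (Fin q)} {v : Fin n} (hX : X v = none)
    {σ : Fin n → Fin q} (hσ : Compat X σ) (b : Fin q) :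
    Compat X (Function.update σ v b) := by
  intro w c hw
  have hwv : w ≠ v := by rintro rfl; rw [hX] at hw; cases hw
  rw [Function.update_of_ne hwv]; exact hσ w c hw

lemma card_slice_eq {X : Fin n → Option (Fin q)} {v : Fin n} (hX : X v = none)
    (P : (Fin n → Fin q) → Prop)
    (hP : ∀ σ b, P σ → P (Function.update σ v b)) (a b : Fin q) :
    (univ.filter fun σ : Fin n → Fin q => (Compat X σ ∧ σ v = a) ∧ P σ).card =
    (univ.filter fun σ : Fin n → Fin q => (Compat X σ ∧ σ v = b) ∧ P σ).card := by
  refine Finset.card_bij' (fun σ _ => Function.update σ v b)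
    (fun σ _ => Function.update σ v a) ?_ ?_ ?_ ?_
  · intro σ hσ
    simp only [mem_filter, mem_univ, true_and] at hσ ⊢
    exact ⟨⟨compat_update_val hX hσ.1.1 b, Function.update_self _ _ _⟩, hP _ _ hσ.2⟩
  · intro σ hσ
    simp only [mem_filter, mem_univ, true_and] at hσ ⊢
    exact ⟨⟨compat_update_val hX hσ.1.1 a, Function.update_self _ _ _⟩, hP _ _ hσ.2⟩
  · intro σ hσ
    simp only [mem_filter, mem_univ, true_and] at hσ
    funext w
    rcases eq_or_ne w v with rfl | hwv
    · simp [hσ.1.2]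
    · simp [Function.update_of_ne hwv]
  · intro σ hσ
    simp only [mem_filter, mem_univ, true_and] at hσ
    funext w
    rcases eq_or_ne w v with rfl | hwv
    · simp [hσ.1.2]
    · simp [Function.update_of_ne hwv]

lemma sum_card_slices {X : Fin n → Option (Fin q)} {v : Fin n}
    (P : (Fin n → Fin q) → Prop) :
    ∑ a : Fin q, (univ.filter fun σ : Fin n → Fin q => (Compat X σ ∧ σ v = a) ∧ P σ).card =
    (univ.filter fun σ : Fin n → Fin q => Compat X σ ∧ P σ).card := by
  rw [Finset.card_eq_sum_card_fiberwise (f := fun σ : Fin n → Fin q => σ v)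
    (t := (univ : Finset (Fin q))) (fun _ _ => mem_univ _)]
  apply Finset.sum_congr rfl
  intro a _
  congr 1
  ext σ
  simp only [mem_filter, mem_univ, true_and]
  tauto

lemma q_mul_slice {X : Fin n → Option (Fin q)} {v : Fin n} (hX : X v = none)
    (P : (Fin n → Fin q) → Prop)
    (hP : ∀ σ b, P σ → P (Function.update σ v b)) (a : Fin q) :
    q * (univ.filter fun σ : Fin n → Fin q => (Compat X σ ∧ σ v = a) ∧ P σ).card =
    (univ.filter fun σ : Fin n → Fin q => Compat X σ ∧ P σ).card := by
  rw [← sum_card_slices (v := v) P]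
  rw [Finset.sum_congr rfl (fun b _ => card_slice_eq hX P hP b a)]
  simp [mul_comm]

lemma compat_card_pos (hq : 0 < q) (X : Fin n → Option (Fin q)) :
    0 < (univ.filter fun σ : Fin n → Fin q => Compat X σ).card := by
  rw [Finset.card_pos]
  refine ⟨fun w => (X w).getD ⟨0, hq⟩, ?_⟩
  simp only [mem_filter, mem_univ, true_and]
  intro w b hw
  simp [hw]

end Aux

section Aux2
variable {n q m : ℕ}

/-- Law of total probability for `condP`. -/
lemma sum_condP (hq : 0 < q) (viol : Fin m → (Fin n → Fin q) → Prop) (j : Fin m)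
    {X : Fin n → Option (Fin q)} {v : Fin n} (hX : X v = none) :
    ∑ a : Fin q, condP viol j (Function.update X v (some a)) = q * condP viol j X := by
  have hq' : (0:ℝ) < q := by exact_mod_cast hq
  have hD : (0:ℝ) < ((univ.filter fun σ : Fin n → Fin q => Compat X σ).card : ℝ) := by
    exact_mod_cast compat_card_pos hq X
  have key : ∀ a : Fin q,
      ((univ.filter fun σ : Fin n → Fin q => Compat (Function.update X v (some a)) σ).card : ℝ)
        = ((univ.filter fun σ : Fin n → Fin q => Compat X σ).card : ℝ) / q := by
    intro a
    have h1 := q_mul_slice hX (fun _ => True) (fun _ _ _ => trivial) a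
    simp only [and_true] at h1
    have hfilt' : (univ.filter fun σ : Fin n → Fin q => Compat (Function.update X v (some a)) σ)
        = univ.filter fun σ : Fin n → Fin q => Compat X σ ∧ σ v = a := by
      ext σ; simp [compat_update_iff hX]
    rw [hfilt', eq_div_iff (ne_of_gt hq'), mul_comm]
    exact_mod_cast h1
  have hNfilt : ∀ a : Fin q,
      (univ.filter fun σ : Fin n → Fin q => Compat (Function.update X v (some a)) σ ∧ viol j σ)
        = univ.filter fun σ : Fin n → Fin q => (Compat X σ ∧ σ v = a) ∧ viol j σ := by
    intro a; ext σ; simp [compat_update_iff hX, and_assoc]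
  have keyN : ∑ a : Fin q,
      ((univ.filter fun σ : Fin n → Fin q =>
          Compat (Function.update X v (some a)) σ ∧ viol j σ).card : ℝ)
      = ((univ.filter fun σ : Fin n → Fin q => Compat X σ ∧ viol j σ).card : ℝ) := by
    have h1 := sum_card_slices (X := X) (v := v) (viol j)
    rw [Finset.sum_congr rfl (fun a _ => by rw [hNfilt a])]
    exact_mod_cast congrArg (fun k : ℕ => (k : ℝ)) h1
  have hterm : ∀ a : Fin q, condP viol j (Function.update X v (some a))
      = ((univ.filter fun σ : Fin n → Fin q =>
            Compat (Function.update X v (some a)) σ ∧ viol j σ).card : ℝ)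
        / (((univ.filter fun σ : Fin n → Fin q => Compat X σ).card : ℝ) / q) := by
    intro a; rw [condP, key a]
  rw [Finset.sum_congr rfl (fun a _ => hterm a), ← Finset.sum_div, keyN, condP]
  rw [div_div_eq_mul_div]
  ring

/-- If `v ∉ vbl j`, conditioning on a value for `v` does not change `condP`. -/
lemma condP_update_not_mem (hq : 0 < q) (vbl : Fin m → Finset (Fin n))
    (viol : Fin m → (Fin n → Fin q) → Prop)
    (hdep : ∀ j (σ τ : Fin n → Fin q), (∀ v ∈ vbl j, σ v = τ v) → (viol j σ ↔ viol j τ))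
    (j : Fin m) {X : Fin n → Option (Fin q)} {v : Fin n} (hX : X v = none)
    (hv : v ∉ vbl j) (a : Fin q) :
    condP viol j (Function.update X v (some a)) = condP viol j X := by
  have hq' : (0:ℝ) < q := by exact_mod_cast hq
  have hinv : ∀ (σ : Fin n → Fin q) (b : Fin q), viol j σ → viol j (Function.update σ v b) := by
    intro σ b hσ
    refine (hdep j σ (Function.update σ v b) ?_).mp hσ
    intro w hw
    have hwv : w ≠ v := fun e => hv (e ▸ hw)
    rw [Function.update_of_ne hwv]
  have hN := q_mul_slice hX (viol j) hinv a
  have hDtriv := q_mul_slice hX (fun _ => True) (fun _ _ _ => trivial) a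
  simp only [and_true] at hDtriv
  have hfilt : (univ.filter fun σ : Fin n → Fin q => Compat (Function.update X v (some a)) σ)
      = univ.filter fun σ : Fin n → Fin q => Compat X σ ∧ σ v = a := by
    ext σ; simp [compat_update_iff hX]
  have hNfilt : (univ.filter fun σ : Fin n → Fin q =>
        Compat (Function.update X v (some a)) σ ∧ viol j σ)
      = univ.filter fun σ : Fin n → Fin q => (Compat X σ ∧ σ v = a) ∧ viol j σ := by
    ext σ; simp [compat_update_iff hX, and_assoc]
  rw [condP, condP, hfilt, hNfilt]
  have e1 : ((univ.filter fun σ : Fin n → Fin q => Compat X σ ∧ viol j σ).card : ℝ)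
      = q * ((univ.filter fun σ : Fin n → Fin q => (Compat X σ ∧ σ v = a) ∧ viol j σ).card : ℝ) := by
    exact_mod_cast (congrArg (fun k : ℕ => (k : ℝ)) hN).symm
  have e2 : ((univ.filter fun σ : Fin n → Fin q => Compat X σ).card : ℝ)
      = q * ((univ.filter fun σ : Fin n → Fin q => Compat X σ ∧ σ v = a).card : ℝ) := by
    exact_mod_cast (congrArg (fun k : ℕ => (k : ℝ)) hDtriv).symm
  rw [e1, e2, mul_div_mul_left _ _ (ne_of_gt hq')]

end Aux2

section Aux3
variable {n q m : ℕ}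

lemma greedyStep_congr (vbl : Fin m → Finset (Fin n))
    (viol : Fin m → (Fin n → Fin q) → Prop) (p' : ℝ) {ω ω' : Fin n → Fin q}
    (st : (Fin n → Option (Fin q)) × Finset (Fin n)) (i : Fin n) (hi : ω i = ω' i) :
    greedyStep vbl viol p' ω st i = greedyStep vbl viol p' ω' st i := by
  simp only [greedyStep, hi]

lemma greedyRun_congr (vbl : Fin m → Finset (Fin n))
    (viol : Fin m → (Fin n → Fin q) → Prop) (p' : ℝ) {ω ω' : Fin n → Fin q} (h : ℕ)
    (hagree : ∀ i : Fin n, (i : ℕ) < h → ω i = ω' i) :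
    greedyRun vbl viol p' ω h = greedyRun vbl viol p' ω' h := by
  induction h with
  | zero => rfl
  | succ k ih =>
    have ih' := ih fun i hi => hagree i (Nat.lt_succ_of_lt hi)
    simp only [greedyRun]
    split_ifs with hk
    · rw [ih', greedyStep_congr vbl viol p' _ _ (hagree ⟨k, hk⟩ (Nat.lt_succ_self k))]
    · exact ih'

lemma greedyRun_none (vbl : Fin m → Finset (Fin n))
    (viol : Fin m → (Fin n → Fin q) → Prop) (p' : ℝ) (ω : Fin n → Fin q) (h : ℕ)
    (v : Fin n) (hv : h ≤ (v : ℕ)) :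
    (greedyRun vbl viol p' ω h).1 v = none := by
  induction h with
  | zero => rfl
  | succ k ih =>
    have hk' : k ≤ (v : ℕ) := Nat.le_of_succ_le hv
    have hkv : v ≠ ⟨k, by omega⟩ := by
      intro e
      have : (v : ℕ) = k := by rw [e]
      omega
    simp only [greedyRun]
    split_ifs with hk
    · rw [greedyStep]
      split_ifs with hfr
      · exact ih hk'
      · simp only
        rw [Function.update_of_ne hkv]
        exact ih hk'
    · exact ih hk'

end Aux3

/-- **Martingale property of the greedy freezing procedure.**
Let `T` be a collection of constraints with pairwise disjoint variable sets, and let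
`M_h(ω) = ∏_{C ∈ T} ℙ[C | P_{ι(h)}]`, where `P_{ι(h)} = (greedyRun vbl viol p' ω h).1` is
the partial assignment of the procedure after the variables `v_1, …, v_h` have been
processed. Then `E_ν[M_{h+1} | 𝔖(h)] = M_h`: since `M_h` depends only on the random values
given to the first `h` variables and the σ-algebra `𝔖(h)` generated by the output of the
procedure on `v_1, …, v_h` is generated by these values, the conditional expectation
identity amounts to the statement that, for every seed `ω`, averaging `M_{h+1}` over the
`q` possible values of the `(h+1)`-st variable yields `M_h(ω)`. -/
theorem greedy_martingale {n q m : ℕ} (hq : 0 < q)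
    (vbl : Fin m → Finset (Fin n)) (viol : Fin m → (Fin n → Fin q) → Prop)
    (hdep : ∀ j (σ τ : Fin n → Fin q), (∀ v ∈ vbl j, σ v = τ v) → (viol j σ ↔ viol j τ))
    (p' : ℝ) (hp' : p' ∈ Set.Ioo (0 : ℝ) 1)
    (T : Finset (Fin m))
    (hT : ∀ C ∈ T, ∀ C' ∈ T, C ≠ C' → Disjoint (vbl C) (vbl C'))
    (h : ℕ) (hh : h < n) (ω : Fin n → Fin q) :
    (∑ a : Fin q, ∏ C ∈ T,
        condP viol C (greedyRun vbl viol p' (Function.update ω ⟨h, hh⟩ a) (h + 1)).1) / q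
      = ∏ C ∈ T, condP viol C (greedyRun vbl viol p' ω h).1 := by
  have hq' : (0:ℝ) < q := by exact_mod_cast hq
  set v : Fin n := ⟨h, hh⟩ with hv
  have hrun : ∀ a : Fin q,
      greedyRun vbl viol p' (Function.update ω v a) h = greedyRun vbl viol p' ω h := by
    intro a
    refine greedyRun_congr vbl viol p' h fun i hi => ?_
    have : i ≠ v := by
      intro e
      rw [e] at hi
      exact absurd hi (lt_irrefl _)
    rw [Function.update_of_ne this]
  set St := greedyRun vbl viol p' ω h with hSt
  have hstep : ∀ a : Fin q, greedyRun vbl viol p' (Function.update ω v a) (h + 1)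
      = greedyStep vbl viol p' (Function.update ω v a) St v := by
    intro a
    show greedyRun vbl viol p' (Function.update ω v a) (h + 1) = _
    rw [greedyRun, dif_pos hh, hrun a]
  have hX : St.1 v = none := greedyRun_none vbl viol p' ω h v (le_refl h)
  by_cases hfr : v ∈ St.2
  · have hconst : ∀ a : Fin q,
        (greedyStep vbl viol p' (Function.update ω v a) St v).1 = St.1 := by
      intro a; rw [greedyStep, if_pos hfr]
    rw [Finset.sum_congr rfl fun a _ => by rw [hstep a, hconst a]]
    rw [Finset.sum_const, card_univ, Fintype.card_fin, nsmul_eq_mul]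
    field_simp
  · have hfst : ∀ a : Fin q,
        (greedyStep vbl viol p' (Function.update ω v a) St v).1
          = Function.update St.1 v (some a) := by
      intro a
      rw [greedyStep, if_neg hfr]
      simp
    have hprod : ∀ a : Fin q,
        (∏ C ∈ T, condP viol C (greedyRun vbl viol p' (Function.update ω v a) (h + 1)).1)
          = ∏ C ∈ T, condP viol C (Function.update St.1 v (some a)) := by
      intro a
      rw [hstep a, hfst a]
    rw [Finset.sum_congr rfl fun a _ => hprod a]
    by_cases hex : ∃ C0 ∈ T, v ∈ vbl C0
    · obtain ⟨C0, hC0T, hC0v⟩ := hex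
      have hother : ∀ C ∈ T.erase C0, v ∉ vbl C := by
        intro C hC hvC
        have hCT := Finset.mem_of_mem_erase hC
        have hne : C ≠ C0 := Finset.ne_of_mem_erase hC
        exact Finset.notMem_empty v (Finset.bot_eq_empty ▸ (hT C hCT C0 hC0T hne).le_bot (Finset.mem_inter.mpr ⟨hvC, hC0v⟩))
      have hsplit : ∀ a : Fin q,
          (∏ C ∈ T, condP viol C (Function.update St.1 v (some a)))
            = condP viol C0 (Function.update St.1 v (some a))
              * ∏ C ∈ T.erase C0, condP viol C St.1 := by
        intro a
        rw [← Finset.mul_prod_erase T _ hC0T]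
        congr 1
        exact Finset.prod_congr rfl fun C hC =>
          condP_update_not_mem hq vbl viol hdep C hX (hother C hC) a
      rw [Finset.sum_congr rfl fun a _ => hsplit a, ← Finset.sum_mul,
        sum_condP hq viol C0 hX, ← Finset.mul_prod_erase T _ hC0T]
      field_simp
    · push_neg at hex
      have hall : ∀ a : Fin q,
          (∏ C ∈ T, condP viol C (Function.update St.1 v (some a)))
            = ∏ C ∈ T, condP viol C St.1 :=
        fun a => Finset.prod_congr rfl fun C hC =>
          condP_update_not_mem hq vbl viol hdep C hX (hex C hC) a
      rw [Finset.sum_congr rfl fun a _ => hall a, Finset.sum_const, card_univ,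
        Fintype.card_fin, nsmul_eq_mul]
      field_simp
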